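/- A multiteam satisfies the multiteam inclusion atom if and only if it decomposes into duplicate-free multiteams satisfying it: for every multiteam M over α and functions f, g : α → β, Multiset.map f M ≤ Multiset.map g M if and only if there exists a finite list L of multisets over α such that M = L.sum and every N in L satisfies N.Nodup and Multiset.map f N ≤ Multiset.map g N. -/

import Mathlib

open Multiset in
private lemma multiteam_exists_cycle {α β : Type*} (M : Multiset α) (f g : α → β)
    (h : Multiset.map f M ≤ Multiset.map g M) (hM : M ≠ 0) :
    ∃ N : Multiset α, N ≤ M ∧ N ≠ 0 ∧ N.Nodup ∧
      Multiset.map f N = Multiset.map g N := by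
  classical
  have step : ∀ x ∈ M, ∃ y, y ∈ M ∧ g y = f x := by
    intro x hx
    have : f x ∈ Multiset.map g M := Multiset.mem_of_le h (Multiset.mem_map_of_mem f hx)
    rcases Multiset.mem_map.mp this with ⟨y, hy, hgy⟩
    exact ⟨y, hy, hgy⟩
  choose nxt hnxtmem hnxtg using step
  obtain ⟨a, ha⟩ := Multiset.exists_mem_of_ne_zero hM
  let u : ℕ → {x : α // x ∈ M} := fun n =>
    Nat.rec ⟨a, ha⟩ (fun _ p => ⟨nxt p.1 p.2, hnxtmem p.1 p.2⟩) n
  have hgu : ∀ n, g (u (n + 1)).1 = f (u n).1 := fun n => hnxtg _ _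
  have hfin : Finite {x : α // x ∈ M} := by
    exact Finite.of_injective
      (fun x : {x // x ∈ M} => (⟨x.1, Multiset.mem_toFinset.mpr x.2⟩ : M.toFinset))
      (fun a b hab => Subtype.ext (by simpa using congrArg Subtype.val hab))
  obtain ⟨m, n, hmn, hueq⟩ := Finite.exists_ne_map_eq_of_infinite u
  have hex : ∃ j, ∃ i, i < j ∧ u i = u j := by
    rcases Nat.lt_or_ge m n with hlt | hge
    · exact ⟨n, m, hlt, hueq⟩
    · exact ⟨m, n, lt_of_le_of_ne hge (Ne.symm hmn), hueq.symm⟩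
  haveI : DecidablePred fun n => ∃ i, i < n ∧ u i = u n := Classical.decPred _
  obtain ⟨i, hij, huij⟩ := Nat.find_spec hex
  set j := Nat.find hex with hj
  have hinj : ∀ k l, k < l → l < j → u k ≠ u l := by
    intro k l hkl hlj he
    exact Nat.find_min hex hlj ⟨k, hkl, he⟩
  obtain ⟨n', hn'⟩ : ∃ n', j - i = n' + 1 := ⟨j - i - 1, by omega⟩
  set l : List α := (List.range' i (j - i)).map (fun k => (u k).1) with hl
  have hmeml : ∀ x ∈ l, x ∈ M := by
    intro x hx
    rcases List.mem_map.mp hx with ⟨k, _, rfl⟩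
    exact (u k).2
  have hnd : l.Nodup := by
    refine (List.nodup_range' (s := i) (n := j - i)).map_on ?_
    intro x hx y hy hxy
    simp only [List.mem_range'_1] at hx hy
    by_contra hne
    rcases Nat.lt_or_ge x y with hlt | hge
    · exact hinj x y hlt (by omega) (Subtype.ext hxy)
    · exact hinj y x (by omega) (by omega) (Subtype.ext hxy.symm)
  have key : ∀ (k m : ℕ), List.map (fun x => g (u x).1) (List.range' (m+1) k)
      = List.map (fun x => f (u x).1) (List.range' m k) := by
    intro k
    induction k with
    | zero => intro m; rfl
    | succ k ih =>
      intro m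
      rw [List.range'_succ, List.range'_succ, List.map_cons, List.map_cons, hgu m, ih (m+1)]
  have hclose : g (u i).1 = f (u (i + n')).1 := by
    rw [huij, show j = i + n' + 1 by omega]
    exact hgu (i + n')
  have hmapeq : Multiset.map f (l : Multiset α) = Multiset.map g (l : Multiset α) := by
    rw [Multiset.map_coe, Multiset.map_coe, List.map_map, List.map_map]
    have e1 : List.map (f ∘ fun k => (u k).1) (List.range' i (j - i))
        = List.map (fun x => f (u x).1) (List.range' i (j - i)) := rfl
    have e2 : List.map (g ∘ fun k => (u k).1) (List.range' i (j - i))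
        = List.map (fun x => g (u x).1) (List.range' i (j - i)) := rfl
    have hL : List.map (fun x => f (u x).1) (List.range' i (n'+1))
        = List.map (fun x => f (u x).1) (List.range' i n') ++ [f (u (i+n')).1] := by
      rw [List.range'_concat]
      simp
    have hR : List.map (fun x => g (u x).1) (List.range' i (n'+1))
        = g (u i).1 :: List.map (fun x => f (u x).1) (List.range' i n') := by
      rw [List.range'_succ, List.map_cons, key]
    rw [e1, e2, hn', hL, hR, hclose]
    exact Multiset.coe_eq_coe.mpr (List.perm_append_singleton _ _)
  refine ⟨(l : Multiset α), ?_, ?_, Multiset.coe_nodup.mpr hnd, hmapeq⟩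
  · exact (Multiset.le_iff_subset (Multiset.coe_nodup.mpr hnd)).mpr
      (fun x hx => hmeml x (Multiset.mem_coe.mp hx))
  · have : l ≠ [] := by
      rw [hl, hn', List.range'_succ]
      simp
    simpa using this

theorem multiteam_inclusion_iff_nodup_decomposition
    {α β : Type*} (M : Multiset α) (f g : α → β) :
    Multiset.map f M ≤ Multiset.map g M ↔
      ∃ L : List (Multiset α), M = L.sum ∧
        ∀ N ∈ L, N.Nodup ∧ Multiset.map f N ≤ Multiset.map g N := by
  classical
  constructor
  · -- forward: strong induction on card
    have main : ∀ n (M : Multiset α), Multiset.card M ≤ n →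
        Multiset.map f M ≤ Multiset.map g M →
        ∃ L : List (Multiset α), M = L.sum ∧
          ∀ N ∈ L, N.Nodup ∧ Multiset.map f N ≤ Multiset.map g N := by
      intro n
      induction n with
      | zero =>
        intro M hc _
        have : M = 0 := Multiset.card_eq_zero.mp (Nat.le_zero.mp hc)
        exact ⟨[], by simp [this], by simp⟩
      | succ n ih =>
        intro M hc h
        by_cases hM : M = 0
        · exact ⟨[], by simp [hM], by simp⟩
        · obtain ⟨N, hNM, hN0, hnd, heq⟩ := multiteam_exists_cycle M f g h hM
          have hMN : M - N + N = M := tsub_add_cancel_of_le hNM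
          have hrem : Multiset.map f (M - N) ≤ Multiset.map g (M - N) := by
            have hf : Multiset.map f (M - N) + Multiset.map f N = Multiset.map f M := by
              rw [← Multiset.map_add, hMN]
            have hg' : Multiset.map g (M - N) + Multiset.map g N = Multiset.map g M := by
              rw [← Multiset.map_add, hMN]
            rw [Multiset.le_iff_count]
            intro b
            have h1 := Multiset.le_iff_count.mp h b
            have h2 := congrArg (Multiset.count b) hf
            have h3 := congrArg (Multiset.count b) hg'
            have h4 := congrArg (Multiset.count b) heq
            simp only [Multiset.count_add] at h2 h3 h4
            omega
          have hcard' : Multiset.card (M - N) ≤ n := by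
            have := Multiset.card_pos.mpr hN0
            have hcsub := congrArg Multiset.card hMN
            simp only [Multiset.card_add] at hcsub
            omega
          obtain ⟨L, hL, hLall⟩ := ih (M - N) hcard' hrem
          refine ⟨N :: L, ?_, ?_⟩
          · rw [List.sum_cons, ← hL, add_comm, hMN]
          · intro N' hN'
            rcases List.mem_cons.mp hN' with rfl | hN'
            · exact ⟨hnd, le_of_eq heq⟩
            · exact hLall N' hN'
    exact fun h => main (Multiset.card M) M le_rfl h
  · rintro ⟨L, rfl, hall⟩
    induction L with
    | nil => simp
    | cons N L ih =>
      simp only [List.sum_cons, Multiset.map_add]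
      exact add_le_add (hall N (List.mem_cons_self (a := N) (l := L))).2
        (ih (fun N' h' => hall N' (List.mem_cons_of_mem _ h')))
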